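/- arXiv:2104.11788 — 3 statements merged into one kernel-verified Lean document; each statement's English description precedes it below -/
import Mathlib

section
/- Let P be a k-uniform tight path on n vertices with n > (k² + k - 2)/2 and k ≥ 2, and let W be a set of vertices of P such that every edge e of P satisfies |e ∩ W| > (k + 1)/2. Then |W| > n/2. -/
/-- Edge set of the k-uniform tight path on n vertices, with vertex ordering v 0, ..., v (n-1):
the edges are the images of all length-k intervals of consecutive indices. -/
def tightPathEdges {V : Type*} [DecidableEq V] (v : ℕ → V) (n k : ℕ) : Finset (Finset V) :=
  (Finset.range (n - k + 1)).image fun i => (Finset.Ico i (i + k)).image v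

/-- If every edge of a k-uniform tight path on n vertices meets W in more than (k+1)/2
vertices and n > (k² + k - 2)/2, then |W| > n/2. -/
theorem tight_path_intersecting_set_half {V : Type*} [DecidableEq V] (v : ℕ → V)
    (hv : Function.Injective v) (n k : ℕ) (hk : 2 ≤ k)
    (hn : k ^ 2 + k - 2 < 2 * n) (W : Finset V)
    (hW : ∀ e ∈ tightPathEdges v n k, ((k : ℝ) + 1) / 2 < ((e ∩ W).card : ℝ)) :
    (n : ℝ) / 2 < (W.card : ℝ) := by
  classical
  obtain ⟨K, hK⟩ : ∃ K, K = k * k := ⟨_, rfl⟩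
  have hn' : K + k < 2 * n + 2 := by
    have h2 : k ^ 2 = K := by rw [hK, sq]
    rw [h2] at hn; omega
  have hkpos : 0 < k := by omega
  have hkn : k ≤ n := by nlinarith [hK]
  set f : ℕ → ℕ := fun i => ((Finset.Ico i (i + k)).filter (fun j => v j ∈ W)).card with hf
  set S : Finset ℕ := (Finset.range n).filter (fun j => v j ∈ W) with hS
  set m : ℕ := n - k + 1 with hm
  -- each edge gives 2 * f i ≥ k + 2
  have key : ∀ i ∈ Finset.range m, k + 2 ≤ 2 * f i := by
    intro i hi
    rw [Finset.mem_range, hm] at hi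
    have hik : i + k ≤ n := by omega
    have hmem : ((Finset.Ico i (i + k)).image v) ∈ tightPathEdges v n k := by
      unfold tightPathEdges
      exact Finset.mem_image.mpr ⟨i, Finset.mem_range.mpr (by omega), rfl⟩
    have hcard : ((Finset.Ico i (i + k)).image v ∩ W).card = f i := by
      have heq : (Finset.Ico i (i + k)).image v ∩ W
          = ((Finset.Ico i (i + k)).filter (fun j => v j ∈ W)).image v := by
        ext x
        simp only [Finset.mem_inter, Finset.mem_image, Finset.mem_filter]
        constructor
        · rintro ⟨⟨j, hj, rfl⟩, hx⟩; exact ⟨j, ⟨hj, hx⟩, rfl⟩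
        · rintro ⟨j, ⟨hj, hx⟩, rfl⟩; exact ⟨⟨j, hj, rfl⟩, hx⟩
      rw [heq, Finset.card_image_of_injective _ hv]
    have hr := hW _ hmem
    rw [hcard] at hr
    have hr2 : (k : ℝ) + 1 < 2 * (f i : ℝ) := by linarith
    have : (k : ℕ) + 1 < 2 * f i := by exact_mod_cast hr2
    omega
  -- lower bound on the sum
  have hlow : m * (k + 2) ≤ ∑ i ∈ Finset.range m, 2 * f i := by
    calc m * (k + 2) = ∑ _i ∈ Finset.range m, (k + 2) := by
          rw [Finset.sum_const, Finset.card_range, smul_eq_mul]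
      _ ≤ ∑ i ∈ Finset.range m, 2 * f i := Finset.sum_le_sum key
  -- rewrite f i via S
  have hfi : ∀ i ∈ Finset.range m, f i = ∑ j ∈ S, if j ∈ Finset.Ico i (i + k) then 1 else 0 := by
    intro i hi
    rw [Finset.mem_range, hm] at hi
    have heq : (Finset.Ico i (i + k)).filter (fun j => v j ∈ W)
        = S.filter (fun j => j ∈ Finset.Ico i (i + k)) := by
      ext j
      simp only [hS, Finset.mem_filter, Finset.mem_Ico, Finset.mem_range]
      constructor
      · rintro ⟨⟨h1, h2⟩, h3⟩; exact ⟨⟨by omega, h3⟩, h1, h2⟩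
      · rintro ⟨⟨h1, h3⟩, h2⟩; exact ⟨h2, h3⟩
    rw [hf]
    simp only
    rw [heq, Finset.card_filter]
  -- upper bound on the sum
  have hup : ∑ i ∈ Finset.range m, f i ≤ k * S.card := by
    calc ∑ i ∈ Finset.range m, f i
        = ∑ i ∈ Finset.range m, ∑ j ∈ S, if j ∈ Finset.Ico i (i + k) then 1 else 0 :=
          Finset.sum_congr rfl hfi
      _ = ∑ j ∈ S, ∑ i ∈ Finset.range m, if j ∈ Finset.Ico i (i + k) then 1 else 0 :=
          Finset.sum_comm
      _ ≤ ∑ _j ∈ S, k := by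
          apply Finset.sum_le_sum
          intro j _
          rw [← Finset.card_filter]
          have hsub : (Finset.range m).filter (fun i => j ∈ Finset.Ico i (i + k))
              ⊆ Finset.Ico (j + 1 - k) (j + 1) := by
            intro i hi
            simp only [Finset.mem_filter, Finset.mem_Ico, Finset.mem_range] at hi ⊢
            omega
          calc ((Finset.range m).filter (fun i => j ∈ Finset.Ico i (i + k))).card
              ≤ (Finset.Ico (j + 1 - k) (j + 1)).card := Finset.card_le_card hsub
            _ ≤ k := by rw [Nat.card_Ico]; omega
      _ = k * S.card := by rw [Finset.sum_const, smul_eq_mul, mul_comm]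
  -- combine
  have h1 : m * (k + 2) ≤ 2 * (k * S.card) := by
    calc m * (k + 2) ≤ ∑ i ∈ Finset.range m, 2 * f i := hlow
      _ = 2 * ∑ i ∈ Finset.range m, f i := by rw [Finset.mul_sum]
      _ ≤ 2 * (k * S.card) := by omega
  have h2 : n * k < m * (k + 2) := by
    obtain ⟨a, ha⟩ : ∃ a, n = a + k := ⟨n - k, by omega⟩
    have hma : m = a + 1 := by omega
    rw [ha, hma]
    nlinarith [hK, hn', ha]
  have h3 : n < 2 * S.card := by
    have hkk : k * n < k * (2 * S.card) := by
      calc k * n = n * k := mul_comm _ _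
        _ < m * (k + 2) := h2
        _ ≤ 2 * (k * S.card) := h1
        _ = k * (2 * S.card) := by ring
    exact Nat.lt_of_mul_lt_mul_left hkk
  have h4 : S.card ≤ W.card := by
    have himg : S.image v ⊆ W := by
      intro x hx
      obtain ⟨j, hj, rfl⟩ := Finset.mem_image.mp hx
      exact (Finset.mem_filter.mp hj).2
    calc S.card = (S.image v).card := (Finset.card_image_of_injective _ hv).symm
      _ ≤ W.card := Finset.card_le_card himg
  have h5 : (n : ℝ) < 2 * (W.card : ℝ) := by exact_mod_cast lt_of_lt_of_le h3 (by omega)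
  linarith
end

section
/- Let G be a k-uniform hypergraph, let Z₁, Z₂ ⊆ E(G) be edge sets, let i ≥ 1, and set q(j) = (1 - 2^{-j})(k+1). Suppose e₁, e₂, z₁, z₂ are edges of G with z₁ ∈ Z₁, z₂ ∈ Z₂, |e₁ ∩ z₁| > q(i), |e₂ ∩ z₂| > q(i), and |e₁ ∩ e₂| ≥ k - 1. Then |z₁ ∩ z₂| > q(i-1). -/
/-- If z₁ ∈ Z₁, z₂ ∈ Z₂ are edges with |e₁ ∩ z₁| > q(i), |e₂ ∩ z₂| > q(i) and
|e₁ ∩ e₂| ≥ k - 1, where q(j) = (1 - 2^{-j})(k+1), then |z₁ ∩ z₂| > q(i-1). -/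
theorem neighborhood_intersection_bound {V : Type*} [DecidableEq V]
    (G Z₁ Z₂ : Finset (Finset V)) (k i : ℕ) (hk : 2 ≤ k) (hi : 1 ≤ i)
    (hunif : ∀ e ∈ G, e.card = k) (hZ₁ : Z₁ ⊆ G) (hZ₂ : Z₂ ⊆ G)
    (e₁ e₂ z₁ z₂ : Finset V) (he₁ : e₁ ∈ G) (he₂ : e₂ ∈ G)
    (hz₁ : z₁ ∈ Z₁) (hz₂ : z₂ ∈ Z₂)
    (h₁ : (1 - 1 / 2 ^ i) * ((k : ℝ) + 1) < ((e₁ ∩ z₁).card : ℝ))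
    (h₂ : (1 - 1 / 2 ^ i) * ((k : ℝ) + 1) < ((e₂ ∩ z₂).card : ℝ))
    (h₁₂ : k - 1 ≤ (e₁ ∩ e₂).card) :
    (1 - 1 / 2 ^ (i - 1)) * ((k : ℝ) + 1) < ((z₁ ∩ z₂).card : ℝ) := by
  have hke1 : e₁.card = k := hunif e₁ he₁
  have hke2 : e₂.card = k := hunif e₂ he₂
  have hsub : e₁ ∩ z₁ ⊆ (e₂ ∩ z₁) ∪ (e₁ \ e₂) := by
    intro x hx
    simp only [Finset.mem_inter, Finset.mem_union, Finset.mem_sdiff] at *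
    by_cases hx2 : x ∈ e₂ <;> tauto
  have hdiff : (e₁ \ e₂).card ≤ 1 := by
    have h := Finset.card_sdiff_add_card_inter e₁ e₂
    omega
  have hA : (e₁ ∩ z₁).card ≤ (e₂ ∩ z₁).card + 1 := by
    have := Finset.card_le_card hsub
    have := Finset.card_union_le (e₂ ∩ z₁) (e₁ \ e₂)
    omega
  have hB : (e₂ ∩ z₁).card + (e₂ ∩ z₂).card ≤ (z₁ ∩ z₂).card + k := by
    have h1 : ((e₂ ∩ z₁) ∩ (e₂ ∩ z₂)).card ≤ (z₁ ∩ z₂).card := by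
      apply Finset.card_le_card
      intro x hx
      simp only [Finset.mem_inter] at *
      tauto
    have h2 : ((e₂ ∩ z₁) ∪ (e₂ ∩ z₂)).card ≤ k := by
      rw [← hke2]
      apply Finset.card_le_card
      intro x hx
      simp only [Finset.mem_inter, Finset.mem_union] at *
      tauto
    have := Finset.card_union_add_card_inter (e₂ ∩ z₁) (e₂ ∩ z₂)
    omega
  have hAr : ((e₁ ∩ z₁).card : ℝ) ≤ ((e₂ ∩ z₁).card : ℝ) + 1 := by exact_mod_cast hA
  have hBr : ((e₂ ∩ z₁).card : ℝ) + ((e₂ ∩ z₂).card : ℝ) ≤ ((z₁ ∩ z₂).card : ℝ) + k := by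
    exact_mod_cast hB
  have hpow : (2 : ℝ) ^ i = 2 * 2 ^ (i - 1) := by
    rw [← pow_succ']
    congr 1
    omega
  have ht : (1 : ℝ) / 2 ^ i = 1 / 2 ^ (i - 1) / 2 := by
    rw [hpow]; ring
  rw [ht] at h₁ h₂
  linarith
end

section
/- Let G be a k-uniform hypergraph, Z₁, Z₂ ⊆ E(G) edge sets with disjoint vertex covers (⋃Z₁ ∩ ⋃Z₂ = ∅), and i ≥ 1 an integer with q(j) = (1 - 2^{-j})(k+1). Then for any e₁ ∈ N_{>q(i)}(Z₁) and e₂ ∈ N_{>q(i)}(Z₂), we have |e₁ ∩ e₂| < k - 1. -/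
/-- The q-neighborhood of an edge set Z in the hypergraph G:
all edges of G meeting some edge of Z in more than q vertices. -/
def qNeighborhood {V : Type*} [DecidableEq V] (G Z : Finset (Finset V)) (q : ℝ) :
    Set (Finset V) :=
  {e | e ∈ G ∧ ∃ z ∈ Z, q < ((e ∩ z).card : ℝ)}

/-- If Z₁, Z₂ have disjoint vertex covers, then edges of the q(i)-neighborhoods of Z₁ and
Z₂ intersect in fewer than k - 1 vertices, where q(i) = (1 - 2^{-i})(k+1). -/
theorem neighborhoods_nearly_disjoint {V : Type*} [DecidableEq V]
    (G Z₁ Z₂ : Finset (Finset V)) (k i : ℕ) (hk : 2 ≤ k) (hi : 1 ≤ i)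
    (hunif : ∀ e ∈ G, e.card = k) (hZ₁ : Z₁ ⊆ G) (hZ₂ : Z₂ ⊆ G)
    (hdisj : Disjoint (Z₁.biUnion id) (Z₂.biUnion id))
    (e₁ e₂ : Finset V)
    (he₁ : e₁ ∈ qNeighborhood G Z₁ ((1 - 1 / 2 ^ i) * ((k : ℝ) + 1)))
    (he₂ : e₂ ∈ qNeighborhood G Z₂ ((1 - 1 / 2 ^ i) * ((k : ℝ) + 1))) :
    (e₁ ∩ e₂).card < k - 1 := by
  obtain ⟨he₁G, z₁, hz₁, ha⟩ := he₁
  obtain ⟨he₂G, z₂, hz₂, hc⟩ := he₂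
  by_contra h
  push_neg at h
  -- z₁ and z₂ are disjoint
  have hz₁sub : z₁ ⊆ Z₁.biUnion id := fun v hv =>
    Finset.mem_biUnion.mpr ⟨z₁, hz₁, hv⟩
  have hz₂sub : z₂ ⊆ Z₂.biUnion id := fun v hv =>
    Finset.mem_biUnion.mpr ⟨z₂, hz₂, hv⟩
  have hzd : Disjoint z₁ z₂ := Finset.disjoint_of_subset_left hz₁sub
    (Finset.disjoint_of_subset_right hz₂sub hdisj)
  have hcard₁ : e₁.card = k := hunif e₁ he₁G
  have hcard₂ : e₂.card = k := hunif e₂ he₂G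
  -- (e₂ \ e₁).card ≤ 1
  have hsd : (e₂ ∩ e₁).card + (e₂ \ e₁).card = e₂.card :=
    Finset.card_inter_add_card_sdiff e₂ e₁
  have hie : (e₂ ∩ e₁).card = (e₁ ∩ e₂).card := by rw [Finset.inter_comm]
  have hsd1 : (e₂ \ e₁).card ≤ 1 := by omega
  -- e₂ ∩ z₂ ⊆ (e₁ ∩ z₂) ∪ (e₂ \ e₁)
  have hsub : e₂ ∩ z₂ ⊆ (e₁ ∩ z₂) ∪ (e₂ \ e₁) := by
    intro v hv
    simp only [Finset.mem_inter, Finset.mem_union, Finset.mem_sdiff] at hv ⊢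
    by_cases hve : v ∈ e₁
    · exact Or.inl ⟨hve, hv.2⟩
    · exact Or.inr ⟨hv.1, hve⟩
  have hbound : (e₂ ∩ z₂).card ≤ (e₁ ∩ z₂).card + 1 :=
    le_trans (Finset.card_le_card hsub)
      (le_trans (Finset.card_union_le _ _) (by omega))
  -- (e₁ ∩ z₁) and (e₁ ∩ z₂) disjoint subsets of e₁
  have hdisj' : Disjoint (e₁ ∩ z₁) (e₁ ∩ z₂) :=
    Finset.disjoint_of_subset_left (Finset.inter_subset_right)
      (Finset.disjoint_of_subset_right (Finset.inter_subset_right) hzd)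
  have hsum : (e₁ ∩ z₁).card + (e₁ ∩ z₂).card ≤ k := by
    rw [← Finset.card_union_of_disjoint hdisj', ← hcard₁]
    exact Finset.card_le_card (Finset.union_subset Finset.inter_subset_left
      Finset.inter_subset_left)
  -- now real arithmetic
  have h2i : (2:ℝ) ≤ 2 ^ i := by
    calc (2:ℝ) = 2 ^ 1 := (pow_one 2).symm
    _ ≤ 2 ^ i := pow_le_pow_right₀ (by norm_num) hi
  have hpos : (0:ℝ) < 2 ^ i := by positivity
  have hq : (k : ℝ) + 1 ≤ 2 * ((1 - 1 / 2 ^ i) * ((k : ℝ) + 1)) := by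
    have h1 : (1:ℝ) / 2 ^ i ≤ 1 / 2 := by
      apply div_le_div_of_nonneg_left (by norm_num) (by norm_num) h2i
    have hkpos : (0:ℝ) < (k:ℝ) := by exact_mod_cast (by omega : 0 < k)
    nlinarith [mul_nonneg (by linarith : (0:ℝ) ≤ 1 - 2 * (1 / 2 ^ i))
      (by linarith : (0:ℝ) ≤ (k:ℝ) + 1)]
  have hbR : ((e₂ ∩ z₂).card : ℝ) ≤ ((e₁ ∩ z₂).card : ℝ) + 1 := by
    exact_mod_cast hbound
  have hsumR : ((e₁ ∩ z₁).card : ℝ) + ((e₁ ∩ z₂).card : ℝ) ≤ (k : ℝ) := by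
    exact_mod_cast hsum
  linarith
end
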